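/- (Feuerbach) The distance from the incenter I to the nine-point center N equals R/2 − r, where R is the circumradius and r the inradius; hence the nine-point circle (radius R/2) is internally tangent to the incircle. -/

import Mathlib

open RealInnerProductSpace


theorem feuerbach_incircle
    (u v w : EuclideanSpace ℝ (Fin 2)) (R a b c s F r : ℝ)
    (hu : ‖u‖ = R) (hv : ‖v‖ = R) (hw : ‖w‖ = R)
    (ha : a = ‖v - w‖) (hb : b = ‖u - w‖) (hc : c = ‖u - v‖)
    (ha0 : 0 < a) (hb0 : 0 < b) (hc0 : 0 < c)
    (hs : s = (a + b + c) / 2)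
    (hF : F ^ 2 = s * (s - a) * (s - b) * (s - c)) (hF0 : 0 < F)
    (hr : r = F / s)
    (hRr : R * r = a * b * c / (4 * s))
    (hEuler : 2 * r ≤ R) :
    ‖(2⁻¹ : ℝ) • (u + v + w) - (2 * s)⁻¹ • (a • u + b • v + c • w)‖ = R / 2 - r := by
  have hs0 : 0 < s := by rw [hs]; linarith
  have hs' : s ≠ 0 := ne_of_gt hs0
  -- inner products
  have hvw : ⟪v, w⟫ = R ^ 2 - a ^ 2 / 2 := by
    have h1 : ‖v - w‖ ^ 2 = ‖v‖ ^ 2 - 2 * ⟪v, w⟫ + ‖w‖ ^ 2 := norm_sub_sq_real v w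
    have h2 : a ^ 2 = ‖v - w‖ ^ 2 := by rw [ha]
    rw [hv, hw] at h1; linarith
  have huw : ⟪u, w⟫ = R ^ 2 - b ^ 2 / 2 := by
    have h1 : ‖u - w‖ ^ 2 = ‖u‖ ^ 2 - 2 * ⟪u, w⟫ + ‖w‖ ^ 2 := norm_sub_sq_real u w
    have h2 : b ^ 2 = ‖u - w‖ ^ 2 := by rw [hb]
    rw [hu, hw] at h1; linarith
  have huv : ⟪u, v⟫ = R ^ 2 - c ^ 2 / 2 := by
    have h1 : ‖u - v‖ ^ 2 = ‖u‖ ^ 2 - 2 * ⟪u, v⟫ + ‖v‖ ^ 2 := norm_sub_sq_real u v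
    have h2 : c ^ 2 = ‖u - v‖ ^ 2 := by rw [hc]
    rw [hu, hv] at h1; linarith
  set W : EuclideanSpace ℝ (Fin 2) := (s - a) • u + ((s - b) • v + (s - c) • w) with hW
  have hV : (2⁻¹ : ℝ) • (u + v + w) - (2 * s)⁻¹ • (a • u + b • v + c • w)
      = (2 * s)⁻¹ • W := by
    rw [hW]
    match_scalars <;> field_simp <;> ring
  have hWexp : ⟪W, W⟫ = (s - a) ^ 2 * R ^ 2 + (s - b) ^ 2 * R ^ 2 + (s - c) ^ 2 * R ^ 2
      + 2 * (s - a) * (s - b) * ⟪u, v⟫ + 2 * (s - a) * (s - c) * ⟪u, w⟫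
      + 2 * (s - b) * (s - c) * ⟪v, w⟫ := by
    have huu : ⟪u, u⟫ = R ^ 2 := by rw [real_inner_self_eq_norm_sq, hu]
    have hvv : ⟪v, v⟫ = R ^ 2 := by rw [real_inner_self_eq_norm_sq, hv]
    have hww : ⟪w, w⟫ = R ^ 2 := by rw [real_inner_self_eq_norm_sq, hw]
    simp only [hW, inner_add_left, inner_add_right, real_inner_smul_left,
      real_inner_smul_right, huu, hvv, hww, real_inner_comm v u, real_inner_comm w u,
      real_inner_comm w v, huv, huw, hvw]
    ring
  have h1 : 4 * s * (R * r) = a * b * c := by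
    rw [hRr]; field_simp
  have h2 : (s * r) ^ 2 = s * (s - a) * (s - b) * (s - c) := by
    have : s * r = F := by rw [hr]; field_simp
    rw [this, hF]
  have key : ‖W‖ ^ 2 = (s * (R - 2 * r)) ^ 2 := by
    rw [← real_inner_self_eq_norm_sq, hWexp, huv, huw, hvw]
    subst hs
    linear_combination ((a + b + c) / 2) * h1 - 4 * h2
  have hWnorm : ‖W‖ = s * (R - 2 * r) := by
    have h3 : 0 ≤ s * (R - 2 * r) := by
      apply mul_nonneg hs0.le; linarith
    calc ‖W‖ = Real.sqrt (‖W‖ ^ 2) := by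
          rw [Real.sqrt_sq (norm_nonneg W)]
      _ = s * (R - 2 * r) := by rw [key, Real.sqrt_sq h3]
  rw [hV, norm_smul, hWnorm]
  rw [Real.norm_eq_abs, abs_of_pos (by positivity : (0:ℝ) < (2 * s)⁻¹)]
  field_simp
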